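/- For every even integer n ≥ 2, Cov(n, n/2) = (1/4)·( 2^{−(n/2−1)}·binom(n/2−1, ⌊n/4⌋) )². Moreover, there exists a constant C > 0 such that for all even integers n ≥ 4, | Cov(n, n/2) − 1/(π(n−2)) | ≤ C/n². -/

import Mathlib

open Real

/-- Binomial coefficient with an integer lower index, with the convention that it
vanishes for negative lower index (and, via `Nat.choose`, above the upper index). -/
def ibinom (a : ℕ) (b : ℤ) : ℕ := if 0 ≤ b then a.choose b.toNat else 0

/-- The fold covariance of k-fold cross-validation of the Majority algorithm on `n`
i.i.d. uniformly random binary labels with fold size `m = n/k`: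
`Cov(n, m) = 2^{-n} · Σ_{j=0}^{m-1} binom(m-1, j)² · binom(n-2m, ⌊(n-m)/2⌋ - j)`. -/
noncomputable def Cov (n m : ℕ) : ℝ :=
  (2 : ℝ)⁻¹ ^ n * ∑ j ∈ Finset.range m,
    ((m - 1).choose j : ℝ) ^ 2 * (ibinom (n - 2 * m) (((n : ℤ) - m) / 2 - j) : ℝ)

/-! ### Auxiliary definitions and lemmas -/

/-- The normalized central binomial coefficient `2^{-2k} * C(2k, k)`. -/
noncomputable def cbR (k : ℕ) : ℝ := (2 : ℝ)⁻¹ ^ (2 * k) * (k.centralBinom : ℝ)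

lemma cbR_pos (k : ℕ) : 0 < cbR k := by
  have h := k.centralBinom_pos
  unfold cbR
  positivity

lemma cbR_succ (k : ℕ) : cbR (k + 1) = cbR k * ((2 * k + 1) / (2 * k + 2)) := by
  have h : ((k : ℝ) + 1) * ((k + 1).centralBinom : ℝ)
      = 2 * (2 * k + 1) * (k.centralBinom : ℝ) := by
    exact_mod_cast congrArg (Nat.cast (R := ℝ)) (Nat.succ_mul_centralBinom_succ k)
  have hk : ((2 : ℝ) * k + 2) ≠ 0 := by positivity
  unfold cbR
  rw [← mul_div_assoc, eq_div_iff hk]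
  linear_combination ((2:ℝ)⁻¹ ^ (2*k) / 2) * h

lemma cbR_sq_W (k : ℕ) : cbR k ^ 2 * ((2 * k + 1) * Real.Wallis.W k) = 1 := by
  induction k with
  | zero => simp [cbR, Real.Wallis.W, Nat.centralBinom]
  | succ k ih =>
    rw [Real.Wallis.W_succ, cbR_succ]
    have h1 : ((2:ℝ) * k + 1) ≠ 0 := by positivity
    have h2 : ((2:ℝ) * k + 2) ≠ 0 := by positivity
    have h3 : ((2:ℝ) * k + 3) ≠ 0 := by positivity
    push_cast
    field_simp
    linear_combination (2*(k:ℝ)+3) * ih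

lemma t_lb (k : ℕ) : π * k ≤ (2 * k + 1) * Real.Wallis.W k := by
  have h := Real.Wallis.le_W k
  have h2 : (0:ℝ) < 2 * k + 2 := by positivity
  rw [div_mul_eq_mul_div, div_le_iff₀ h2] at h
  have hnn : (0:ℝ) ≤ 2 * k + 1 := by positivity
  nlinarith [mul_le_mul_of_nonneg_left h hnn, pi_pos, Nat.cast_nonneg (α := ℝ) k]

lemma t_ub (k : ℕ) : (2 * k + 1) * Real.Wallis.W k ≤ π * k + π / 2 := by
  have h := Real.Wallis.W_le k
  have hnn : (0:ℝ) ≤ 2 * k + 1 := by positivity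
  nlinarith [mul_le_mul_of_nonneg_left h hnn]

lemma estA (k : ℕ) (hk : 1 ≤ k) :
    |(1/4 : ℝ) * cbR k ^ 2 - 1 / (π * (4 * k))| ≤ 6 / (4 * (k:ℝ) + 2) ^ 2 := by
  have hW := cbR_sq_W k
  set t := (2 * (k:ℝ) + 1) * Real.Wallis.W k with ht
  have htpos : 0 < t := by
    have := Real.Wallis.W_pos k
    positivity
  have hcb : cbR k ^ 2 = t⁻¹ := eq_inv_of_mul_eq_one_left hW
  have hlb := t_lb k
  have hub := t_ub k
  have hπ : (0:ℝ) < π := pi_pos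
  have hk1 : (1:ℝ) ≤ (k:ℝ) := by exact_mod_cast hk
  have hkpos : (0:ℝ) < (k:ℝ) := by linarith
  have hπk : (0:ℝ) < π * k := by positivity
  have hπ3 : (0:ℝ) ≤ π - 3 := by linarith [pi_gt_three]
  rw [hcb, abs_le]
  have e1 : 1 / (π * (4 * (k:ℝ))) - 1/4 * t⁻¹ = (t - π * k) / (4 * ((π * k) * t)) := by
    field_simp
  have e2 : (t - π * k) / (4 * ((π * k) * t)) ≤ (π / 2) / (4 * ((π * k) * (π * k))) := by
    apply div_le_div₀ (by positivity) (by linarith) (by positivity)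
    gcongr
  have e3 : (π / 2) / (4 * ((π * k) * (π * k))) ≤ 6 / (4 * (k:ℝ) + 2) ^ 2 := by
    rw [div_le_div_iff₀ (by positivity) (by positivity)]
    have hq : (0:ℝ) ≤ 24 * π * (k:ℝ)^2 * (π - 3) := by
      apply mul_nonneg (by positivity) hπ3
    have hw : (0:ℝ) ≤ π * (64 * (k:ℝ)^2 - 8 * k - 2) := by
      apply mul_nonneg hπ.le
      nlinarith [hk1]
    nlinarith [hq, hw]
  constructor
  · linarith
  · have h4 : (1/4:ℝ) * t⁻¹ ≤ 1/4 * (π * k)⁻¹ := by gcongr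
    have h0 : 1 / (π * (4 * (k:ℝ))) = 1/4 * (π * k)⁻¹ := by
      field_simp
    have hb : (0:ℝ) ≤ 6 / (4 * (k:ℝ) + 2) ^ 2 := by positivity
    linarith

lemma estB (k : ℕ) :
    |(1/4 : ℝ) * cbR (k+1) ^ 2 - 1 / (π * (4 * k + 2))| ≤ 6 / (4 * (k:ℝ) + 4) ^ 2 := by
  have hW := cbR_sq_W (k+1)
  have hlb := t_lb (k+1)
  have hub := t_ub (k+1)
  push_cast at hW hlb hub
  set t := (2 * ((k:ℝ) + 1) + 1) * Real.Wallis.W (k+1) with ht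
  have htpos : 0 < t := by
    have := Real.Wallis.W_pos (k+1)
    positivity
  have hcb : cbR (k+1) ^ 2 = t⁻¹ := eq_inv_of_mul_eq_one_left hW
  have hπ : (0:ℝ) < π := pi_pos
  have hkpos : (0:ℝ) ≤ (k:ℝ) := Nat.cast_nonneg k
  have hπ3 : (0:ℝ) ≤ π - 3 := by linarith [pi_gt_three]
  have hs : (0:ℝ) < π * ((k:ℝ) + 1/2) := by positivity
  have hst : π * ((k:ℝ) + 1/2) ≤ t := by linarith
  rw [hcb, abs_le]
  have e1 : 1 / (π * (4 * (k:ℝ) + 2)) - 1/4 * t⁻¹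
      = (t - π * ((k:ℝ) + 1/2)) / (4 * ((π * ((k:ℝ) + 1/2)) * t)) := by
    field_simp
    ring
  have e2 : (t - π * ((k:ℝ) + 1/2)) / (4 * ((π * ((k:ℝ) + 1/2)) * t))
      ≤ π / (4 * ((π * ((k:ℝ) + 1/2)) * (π * ((k:ℝ) + 1/2)))) := by
    apply div_le_div₀ (by positivity) (by linarith) (by positivity)
    gcongr
  have e3 : π / (4 * ((π * ((k:ℝ) + 1/2)) * (π * ((k:ℝ) + 1/2)))) ≤ 6 / (4 * (k:ℝ) + 4) ^ 2 := by
    rw [div_le_div_iff₀ (by positivity) (by positivity)]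
    have hq : (0:ℝ) ≤ 24 * π * ((k:ℝ) + 1/2)^2 * (π - 3) := by
      apply mul_nonneg (by positivity) hπ3
    have hw : (0:ℝ) ≤ π * (56 * (k:ℝ)^2 + 40 * k + 2) := by positivity
    nlinarith [hq, hw]
  constructor
  · linarith
  · have h4 : (1/4:ℝ) * t⁻¹ ≤ 1/4 * (π * ((k:ℝ) + 1/2))⁻¹ := by gcongr
    have h0 : 1 / (π * (4 * (k:ℝ) + 2)) = 1/4 * (π * ((k:ℝ) + 1/2))⁻¹ := by
      field_simp
      ring
    have hb : (0:ℝ) ≤ 6 / (4 * (k:ℝ) + 4) ^ 2 := by positivity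
    linarith

lemma ibinom_zero_left (b : ℤ) : ibinom 0 b = if b = 0 then 1 else 0 := by
  unfold ibinom
  rcases lt_trichotomy b 0 with h | h | h
  · rw [if_neg (not_le.mpr h), if_neg (by omega)]
  · subst h; simp
  · rw [if_pos h.le, if_neg (by omega), Nat.choose_eq_zero_of_lt (by omega)]

lemma cov_half (n : ℕ) (h2 : 2 ≤ n) (he : Even n) :
    Cov n (n / 2) =
      (1 / 4) * ((2 : ℝ)⁻¹ ^ (n / 2 - 1) * ((n / 2 - 1).choose (n / 4) : ℝ)) ^ 2 := by
  obtain ⟨m, rfl⟩ := he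
  have hm1 : 1 ≤ m := by omega
  obtain ⟨m', rfl⟩ := Nat.exists_eq_add_of_le hm1
  set m := 1 + m' with hmdef
  have hd2 : (m + m) / 2 = m := by omega
  have hd4 : (m + m) / 4 = m / 2 := by omega
  have hsub : m + m - 2 * m = 0 := by omega
  rw [Cov, hd2, hd4, hsub]
  have hterm : ∀ j ∈ Finset.range m,
      ((m - 1).choose j : ℝ) ^ 2 * (ibinom 0 ((((m + m : ℕ) : ℤ) - m) / 2 - j) : ℝ)
        = if j = m / 2 then ((m - 1).choose j : ℝ) ^ 2 else 0 := by
    intro j hj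
    have hb : (((m + m : ℕ) : ℤ) - m) / 2 - j = ((m : ℤ) / 2) - j := by
      push_cast
      ring_nf
    rw [hb, ibinom_zero_left]
    have hcast : ((m : ℤ) / 2) = ((m / 2 : ℕ) : ℤ) := by omega
    by_cases h : j = m / 2
    · subst h
      rw [if_pos (by omega), if_pos rfl]
      norm_num
    · rw [if_neg (by omega), if_neg h]
      norm_num
  rw [Finset.sum_congr rfl hterm, Finset.sum_ite_eq' (Finset.range m) (m / 2)]
  rw [if_pos (Finset.mem_range.mpr (Nat.div_lt_self (by omega) one_lt_two))]
  have hexp : ((1 + m') + (1 + m')) = 2 * m' + 2 := by ring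
  have hm1' : m - 1 = m' := by omega
  rw [hm1', hexp, mul_pow, ← pow_mul]
  ring_nf

lemma a_eq (n : ℕ) (h2 : 2 ≤ n) (he : Even n) :
    (2 : ℝ)⁻¹ ^ (n / 2 - 1) * ((n / 2 - 1).choose (n / 4) : ℝ) = cbR (n / 4) := by
  obtain ⟨m, rfl⟩ := he
  have hm1 : 1 ≤ m := by omega
  have hd2 : (m + m) / 2 = m := by omega
  rw [hd2]
  rcases Nat.even_or_odd m with ⟨k, rfl⟩ | ⟨k, rfl⟩
  · obtain ⟨k', rfl⟩ : ∃ k', k = k' + 1 := ⟨k - 1, by omega⟩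
    have h4 : ((k' + 1) + (k' + 1) + ((k' + 1) + (k' + 1))) / 4 = k' + 1 := by omega
    have hm1' : (k' + 1) + (k' + 1) - 1 = 2 * k' + 1 := by omega
    rw [h4, hm1']
    have h2C : (k' + 1).centralBinom = 2 * ((2 * k' + 1).choose (k' + 1)) := by
      rw [Nat.centralBinom]
      have h21 : 2 * (k' + 1) = (2 * k' + 1) + 1 := by ring
      rw [h21, Nat.choose_succ_succ, ← Nat.choose_symm_half]
      simp only [Nat.succ_eq_add_one]
      omega
    rw [cbR, h2C]
    have h22 : 2 * (k' + 1) = (2 * k' + 1) + 1 := by ring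
    rw [h22, pow_succ]
    push_cast
    ring
  · have h4 : (2 * k + 1 + (2 * k + 1)) / 4 = k := by omega
    have hm1' : 2 * k + 1 - 1 = 2 * k := by omega
    rw [h4, hm1', cbR, Nat.centralBinom]

/-- **2-fold endpoint (`m = n/2`).**
For even `n`, `Cov(n, n/2) = (1/4)·(2^{-(n/2-1)}·binom(n/2-1, ⌊n/4⌋))²`, and
`Cov(n, n/2) = 1/(π(n-2)) + O(n^{-2})`. -/
theorem cov_twofold_endpoint :
    (∀ n : ℕ, 2 ≤ n → Even n →
      Cov n (n / 2) =
        (1 / 4) * ((2 : ℝ)⁻¹ ^ (n / 2 - 1) * ((n / 2 - 1).choose (n / 4) : ℝ)) ^ 2) ∧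
    ∃ C : ℝ, 0 < C ∧ ∀ n : ℕ, 4 ≤ n → Even n →
      |Cov n (n / 2) - 1 / (π * ((n : ℝ) - 2))| ≤ C / (n : ℝ) ^ 2 := by
  constructor
  · exact fun n h2 he => cov_half n h2 he
  · refine ⟨6, by norm_num, ?_⟩
    intro n h4 he
    have h2 : 2 ≤ n := by omega
    have hcov : Cov n (n / 2) = (1/4 : ℝ) * cbR (n / 4) ^ 2 := by
      rw [cov_half n h2 he, a_eq n h2 he]
    rw [hcov]
    obtain ⟨m, rfl⟩ := he
    have hm2 : 2 ≤ m := by omega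
    rcases Nat.even_or_odd m with ⟨k, rfl⟩ | ⟨k, rfl⟩
    · obtain ⟨k', rfl⟩ : ∃ k', k = k' + 1 := ⟨k - 1, by omega⟩
      have hq4 : ((k' + 1) + (k' + 1) + ((k' + 1) + (k' + 1))) / 4 = k' + 1 := by omega
      rw [hq4]
      have hn : (((k' + 1) + (k' + 1) + ((k' + 1) + (k' + 1)) : ℕ) : ℝ) = 4 * k' + 4 := by
        push_cast
        ring
      rw [hn]
      have hd : (4 * (k':ℝ) + 4) - 2 = 4 * k' + 2 := by ring
      rw [hd]
      exact estB k'
    · have hk1 : 1 ≤ k := by omega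
      have hq4 : (2 * k + 1 + (2 * k + 1)) / 4 = k := by omega
      rw [hq4]
      have hn : ((2 * k + 1 + (2 * k + 1) : ℕ) : ℝ) = 4 * k + 2 := by
        push_cast
        ring
      rw [hn]
      have hd : (4 * (k:ℝ) + 2) - 2 = 4 * k := by ring
      rw [hd]
      exact estA k hk1
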